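/- Under the same assumptions, the thresholded function F̃^thresh(x) = max(F̃(x), F(x♮) + 3r‖δ‖) is (μ/2)-sharp around its set of minimizers X = {x : F̃(x) ≤ F(x♮) + 3r‖δ‖}: for every x̄ ∉ X there exists x̃ ∈ X with F̃^thresh(x̄) - F̃^thresh(x̃) ≥ (μ/2)‖x̄ - x̃‖. -/

import Mathlib

/-- The thresholded noisy penalized objective
`F̃^thresh(x) = max(F̃(x), F(x0) + 3r‖δ‖)` is `(μ/2)`-sharp around its set of minimizers
`X = {x : F̃(x) ≤ F(x0) + 3r‖δ‖}`: for every `xb ∉ X` there exists `xt ∈ X` with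
`F̃^thresh(xb) - F̃^thresh(xt) ≥ (μ/2)‖xb - xt‖`. -/
theorem thresholded_noisy_objective_sharp
    {V W : Type*} [NormedAddCommGroup V] [NormedSpace ℝ V] [FiniteDimensional ℝ V]
    [NormedAddCommGroup W] [NormedSpace ℝ W] [FiniteDimensional ℝ W]
    (f : V → ℝ) (hf : ConvexOn ℝ Set.univ f)
    (A : V →L[ℝ] W) (K : Set V) (hKclosed : IsClosed K) (hKconv : Convex ℝ K)
    (hKcone : ∀ c : ℝ, 0 ≤ c → ∀ x ∈ K, c • x ∈ K)
    (x0 : V) (hx0K : x0 ∈ K) (b : W) (hb : b = A x0)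
    (μ r ℓ : ℝ) (hμ : 0 < μ) (hr : 0 ≤ r) (hℓ : 0 ≤ ℓ)
    (hsharp : ∀ x : V,
      (f x + r * ‖A x - b‖ + ℓ * Metric.infDist x K) - f x0 ≥ μ * ‖x - x0‖)
    (δ : W)
    (Ft : V → ℝ)
    (hFt : Ft = fun x => f x + r * ‖A x - (b + δ)‖ + ℓ * Metric.infDist x K)
    (c : ℝ) (hc : c = (f x0 + r * ‖A x0 - b‖ + ℓ * Metric.infDist x0 K) + 3 * r * ‖δ‖)
    (X : Set V) (hX : X = {x : V | Ft x ≤ c}) :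
    ∀ xb : V, xb ∉ X → ∃ xt ∈ X,
      max (Ft xb) c - max (Ft xt) c ≥ μ / 2 * ‖xb - xt‖ := by
  intro xb hxb
  have hKne : K.Nonempty := ⟨x0, hx0K⟩
  set F : V → ℝ := fun x => f x + r * ‖A x - b‖ + ℓ * Metric.infDist x K with hFdef
  have hAx0 : A x0 - b = (0 : W) := by rw [hb, sub_self]
  have hd0 : Metric.infDist x0 K = 0 := Metric.infDist_zero_of_mem hx0K
  have hc' : c = f x0 + 3 * (r * ‖δ‖) := by
    rw [hc, hAx0, hd0]; simp; ring
  have hFt0 : Ft x0 = f x0 + r * ‖δ‖ := by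
    rw [hFt]; simp only []
    have : A x0 - (b + δ) = -δ := by rw [hb]; abel
    rw [this, hd0, norm_neg]; ring
  -- |Ft x - F x| ≤ r‖δ‖
  have hclose : ∀ x : V, |Ft x - F x| ≤ r * ‖δ‖ := by
    intro x
    have h1 : Ft x - F x = r * (‖A x - (b + δ)‖ - ‖A x - b‖) := by
      rw [hFt, hFdef]; ring
    rw [h1, abs_mul, abs_of_nonneg hr]
    have h2 : |‖A x - (b + δ)‖ - ‖A x - b‖| ≤ ‖(A x - (b + δ)) - (A x - b)‖ :=
      abs_norm_sub_norm_le _ _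
    have h3 : (A x - (b + δ)) - (A x - b) = -δ := by abel
    rw [h3, norm_neg] at h2
    exact mul_le_mul_of_nonneg_left h2 hr
  have hlow : ∀ x : V, F x - r * ‖δ‖ ≤ Ft x := fun x => by
    have := (abs_le.mp (hclose x)).1; linarith
  have hupp : ∀ x : V, Ft x ≤ F x + r * ‖δ‖ := fun x => by
    have := (abs_le.mp (hclose x)).2; linarith
  have hsharp' : ∀ x : V, μ * ‖x - x0‖ ≤ F x - f x0 := fun x => hsharp x
  have hxbX : c < Ft xb := by
    by_contra h
    exact hxb (by rw [hX]; exact not_lt.mp h)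
  have hmaxb : max (Ft xb) c = Ft xb := max_eq_left hxbX.le
  rcases eq_or_lt_of_le (mul_nonneg hr (norm_nonneg δ)) with h0 | hpos
  · -- case r‖δ‖ = 0
    refine ⟨x0, ?_, ?_⟩
    · rw [hX]
      show Ft x0 ≤ c
      rw [hFt0, hc']; linarith
    · have hFtx0 : Ft x0 = f x0 := by rw [hFt0, ← h0]; ring
      have hcx0 : c = f x0 := by rw [hc', ← h0]; ring
      rw [hmaxb, max_eq_right (le_of_eq (hFtx0.trans hcx0.symm))]
      have h1 := hsharp' xb
      have h2 := hlow xb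
      have h3 : (0:ℝ) ≤ ‖xb - x0‖ := norm_nonneg _
      nlinarith [hcx0]
  · -- case r‖δ‖ > 0
    -- continuity of Ft
    have hfc : Continuous f := by
      have h := hf.continuousOn isOpen_univ
      exact continuousOn_univ.mp h
    have hFtc : Continuous Ft := by
      rw [hFt]
      exact (hfc.add (continuous_const.mul ((A.continuous.sub continuous_const).norm))).add
        (continuous_const.mul (Metric.continuous_infDist_pt K))
    -- convexity of Ft
    have hnormconv : ConvexOn ℝ Set.univ (fun x : V => ‖A x - (b + δ)‖) := by
      refine ⟨convex_univ, fun x _ y _ a a' ha ha' hab => ?_⟩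
      have hv : A (a • x + a' • y) - (b + δ) = a • (A x - (b + δ)) + a' • (A y - (b + δ)) := by
        have h1 : a • (b + δ) + a' • (b + δ) = (b + δ) := by
          rw [← add_smul, hab, one_smul]
        have h2 : a • (A x - (b + δ)) + a' • (A y - (b + δ)) =
            a • A x + a' • A y - (a • (b + δ) + a' • (b + δ)) := by
          rw [smul_sub, smul_sub]; abel
        rw [map_add, map_smul, map_smul, h2, h1]
      simp only [hv]
      calc ‖a • (A x - (b + δ)) + a' • (A y - (b + δ))‖
          ≤ ‖a • (A x - (b + δ))‖ + ‖a' • (A y - (b + δ))‖ := norm_add_le _ _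
        _ = a • ‖A x - (b + δ)‖ + a' • ‖A y - (b + δ)‖ := by
            rw [norm_smul, norm_smul, Real.norm_of_nonneg ha, Real.norm_of_nonneg ha']
            simp [smul_eq_mul]
    have hdistconv : ConvexOn ℝ Set.univ (fun x : V => Metric.infDist x K) := by
      refine ⟨convex_univ, fun x _ y _ a a' ha ha' hab => ?_⟩
      obtain ⟨zx, hzx, hdx⟩ := hKclosed.exists_infDist_eq_dist hKne x
      obtain ⟨zy, hzy, hdy⟩ := hKclosed.exists_infDist_eq_dist hKne y
      have hz : a • zx + a' • zy ∈ K := hKconv hzx hzy ha ha' hab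
      calc Metric.infDist (a • x + a' • y) K
          ≤ dist (a • x + a' • y) (a • zx + a' • zy) := Metric.infDist_le_dist_of_mem hz
        _ ≤ a * dist x zx + a' * dist y zy := by
            rw [dist_eq_norm, dist_eq_norm, dist_eq_norm]
            have h4 : a • x + a' • y - (a • zx + a' • zy) = a • (x - zx) + a' • (y - zy) := by
              rw [smul_sub, smul_sub]; abel
            rw [h4]
            refine (norm_add_le _ _).trans ?_
            rw [norm_smul, norm_smul, Real.norm_of_nonneg ha, Real.norm_of_nonneg ha']
        _ = a • Metric.infDist x K + a' • Metric.infDist y K := by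
            rw [hdx, hdy]; simp [smul_eq_mul]
    have hFtconv : ConvexOn ℝ Set.univ Ft := by
      rw [hFt]
      exact (hf.add (hnormconv.smul hr)).add (hdistconv.smul hℓ)
    -- IVT along the segment from x0 to xb
    set g : ℝ → ℝ := fun t => Ft (x0 + t • (xb - x0)) with hg
    have hgc : ContinuousOn g (Set.Icc 0 1) :=
      (hFtc.comp (continuous_const.add (continuous_id.smul continuous_const))).continuousOn
    have hg0 : g 0 = Ft x0 := by simp [hg]
    have hg1 : g 1 = Ft xb := by simp [hg]
    have hg0lt : g 0 < c := by rw [hg0, hFt0, hc']; linarith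
    have hcmem : c ∈ Set.Icc (g 0) (g 1) := ⟨hg0lt.le, by rw [hg1]; exact hxbX.le⟩
    obtain ⟨t, htmem, hgt⟩ := intermediate_value_Icc (by norm_num : (0:ℝ) ≤ 1) hgc hcmem
    obtain ⟨ht0, ht1⟩ := htmem
    set xt : V := x0 + t • (xb - x0) with hxt
    have hFtxt : Ft xt = c := hgt
    have htpos : 0 < t := by
      rcases ht0.lt_or_eq with h | h
      · exact h
      · exfalso; rw [← h] at hgt; exact absurd hgt hg0lt.ne
    refine ⟨xt, by rw [hX]; exact le_of_eq hFtxt, ?_⟩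
    have hmaxt : max (Ft xt) c = c := max_eq_right (le_of_eq hFtxt)
    rw [hmaxb, hmaxt]
    -- norm identities
    have hxtx0 : ‖xt - x0‖ = t * ‖xb - x0‖ := by
      have : xt - x0 = t • (xb - x0) := by rw [hxt]; abel
      rw [this, norm_smul, Real.norm_of_nonneg htpos.le]
    have hxbxt : ‖xb - xt‖ = (1 - t) * ‖xb - x0‖ := by
      have : xb - xt = (1 - t) • (xb - x0) := by
        rw [hxt, sub_smul, one_smul]; abel
      rw [this, norm_smul, Real.norm_of_nonneg (by linarith : (0:ℝ) ≤ 1 - t)]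
    -- sharpness bound on ‖xt - x0‖
    have hkey : μ * (t * ‖xb - x0‖) ≤ 4 * (r * ‖δ‖) := by
      have h1 := hsharp' xt
      have h2 := hlow xt
      rw [hFtxt, hc'] at h2
      rw [← hxtx0]; linarith
    -- convexity inequality
    have hcvx : c ≤ (1 - t) * Ft x0 + t * Ft xb := by
      have hmem : xt = (1 - t) • x0 + t • xb := by
        rw [hxt, sub_smul, one_smul, smul_sub]; abel
      have := hFtconv.2 (Set.mem_univ x0) (Set.mem_univ xb)
        (by linarith : (0:ℝ) ≤ 1 - t) htpos.le (by ring : (1 - t) + t = 1)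
      rw [← hmem, hFtxt] at this
      simpa [smul_eq_mul] using this
    have hcvx' : (1 - t) * (2 * (r * ‖δ‖)) ≤ t * (Ft xb - c) := by
      rw [hFt0] at hcvx
      rw [hc'] at hcvx ⊢
      linarith
    -- final arithmetic
    rw [ge_iff_le, hxbxt]
    have h1t : (0:ℝ) ≤ 1 - t := by linarith
    have e1 := mul_le_mul_of_nonneg_left hkey h1t
    have e2 : t * (μ / 2 * ((1 - t) * ‖xb - x0‖)) ≤ t * (Ft xb - c) := by
      nlinarith [e1, hcvx']
    exact le_of_mul_le_mul_left e2 htpos
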